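/- Every surjective group homomorphism from the free group F₂ on two generators onto the quaternion group Q₈ has the same kernel. Equivalently, if α, β : F₂ → Q₈ are surjective homomorphisms, then ker α = ker β. -/
import Mathlib

open QuaternionGroup Subgroup

private abbrev Q8 := QuaternionGroup 2

/-- Lift of the quaternion presentation: given `A B` in a group satisfying the Q₈
relations, there is a hom from `QuaternionGroup 2` sending `a 1 ↦ A`, `xa 0 ↦ B`. -/
private lemma quat_lift {G : Type*} [Group G] (A B : G) (hA4 : A ^ 4 = 1)
    (hB2 : B ^ 2 = A ^ 2) (hBA : A * B = B * A⁻¹) :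
    ∃ f : QuaternionGroup 2 →* G,
      f (QuaternionGroup.a 1) = A ∧ f (QuaternionGroup.xa 0) = B := by
  have hA3 : A⁻¹ = A ^ 3 := inv_eq_of_mul_eq_one_right (by rw [← pow_succ']; exact hA4)
  have hAB : ∀ m : ℕ, A ^ m * B = B * A ^ (3 * m) := by
    intro m
    induction m with
    | zero => simp
    | succ k ih =>
        rw [pow_succ, mul_assoc, hBA, hA3, ← mul_assoc, ih, mul_assoc, ← pow_add,
          show 3 * k + 3 = 3 * (k + 1) by ring]
  have key : ∀ u v : ℕ, u % 4 = v % 4 → A ^ u = A ^ v := by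
    intro u v huv
    conv_lhs => rw [← Nat.div_add_mod u 4]
    conv_rhs => rw [← Nat.div_add_mod v 4]
    rw [pow_add, pow_add, pow_mul, pow_mul, hA4, one_pow, one_pow, one_mul, one_mul, huv]
  have e1 : ∀ i j : ZMod (2 * 2), (i + j).val % 4 = (i.val + j.val) % 4 := by decide
  have e2 : ∀ i j : ZMod (2 * 2), (j - i).val % 4 = (3 * i.val + j.val) % 4 := by decide
  have e3 : ∀ i j : ZMod (2 * 2),
      (((2 : ℕ) : ZMod (2 * 2)) + j - i).val % 4 = (2 + (3 * i.val + j.val)) % 4 := by decide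
  refine ⟨{ toFun := fun g => match g with
              | .a i => A ^ i.val
              | .xa i => B * A ^ i.val
            map_one' := ?_
            map_mul' := ?_ }, ?_, ?_⟩
  · show A ^ (0 : ZMod (2 * 2)).val = 1
    simp
  · rintro (i | i) (j | j)
    · rw [a_mul_a]
      show A ^ (i + j).val = A ^ i.val * A ^ j.val
      rw [← pow_add]; exact key _ _ (e1 i j)
    · rw [a_mul_xa]
      show B * A ^ (j - i).val = A ^ i.val * (B * A ^ j.val)
      rw [key _ _ (e2 i j), pow_add, ← mul_assoc, ← hAB, mul_assoc]
    · rw [xa_mul_a]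
      show B * A ^ (i + j).val = B * A ^ i.val * A ^ j.val
      rw [key _ _ (e1 i j), pow_add, mul_assoc]
    · rw [xa_mul_xa]
      show A ^ (((2 : ℕ) : ZMod (2 * 2)) + j - i).val = B * A ^ i.val * (B * A ^ j.val)
      rw [key _ _ (e3 i j), pow_add, ← hB2]
      rw [mul_assoc, ← mul_assoc (A ^ i.val), hAB i.val, pow_two, pow_add]
      group
  · show A ^ (1 : ZMod (2 * 2)).val = A
    rw [show (1 : ZMod (2 * 2)).val = 1 by decide, pow_one]
  · show B * A ^ (0 : ZMod (2 * 2)).val = B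
    simp

/-- From a generating pair of `Q₈`, derive the basic properties. -/
private lemma gen_props (a b : Q8) (h : Subgroup.closure ({a, b} : Set Q8) = ⊤) :
    a ^ 2 ≠ 1 ∧ b ^ 2 ≠ 1 ∧ b ≠ a ∧ b ≠ a⁻¹ := by
  have hnoncomm : ¬ (∀ g k : Q8, g * k = k * g) := by decide
  have hcen : ∀ x : Q8, x ^ 2 = 1 → ∀ g : Q8, x * g = g * x := by decide
  -- both central is impossible
  have hnc : ¬ (a ∈ Subgroup.center Q8 ∧ b ∈ Subgroup.center Q8) := by
    rintro ⟨ha, hb⟩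
    have hle : (⊤ : Subgroup Q8) ≤ Subgroup.center Q8 := by
      rw [← h]
      refine (Subgroup.closure_le _).2 ?_
      rintro x hx
      simp only [Set.mem_insert_iff, Set.mem_singleton_iff] at hx
      rcases hx with rfl | rfl <;> assumption
    exact hnoncomm fun g k => (Subgroup.mem_center_iff.1 (hle (Subgroup.mem_top k)) g)
  -- if one of them is central, the other is central too
  have himp : ∀ x y : Q8, ({a, b} : Set Q8) = {x, y} → x ∈ Subgroup.center Q8 →
      y ∈ Subgroup.center Q8 := by
    intro x y hxy hx
    have hle : (⊤ : Subgroup Q8) ≤ Subgroup.centralizer {y} := by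
      rw [← h]
      refine (Subgroup.closure_le _).2 ?_
      rw [hxy]
      rintro z hz
      simp only [Set.mem_insert_iff, Set.mem_singleton_iff] at hz
      rcases hz with rfl | rfl
      · exact Subgroup.center_le_centralizer _ hx
      · exact Subgroup.mem_centralizer_iff.2 (by rintro h hh; simp_all)
    refine Subgroup.mem_center_iff.2 fun g => ?_
    exact (Subgroup.mem_centralizer_iff.1 (hle (Subgroup.mem_top g)) y rfl).symm
  have hsq : ∀ x : Q8, (x = a ∨ x = b) → x ^ 2 ≠ 1 := by
    rintro x hx hx2
    have hxc : x ∈ Subgroup.center Q8 :=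
      Subgroup.mem_center_iff.2 fun g => (hcen x hx2 g).symm
    rcases hx with rfl | rfl
    · exact hnc ⟨hxc, himp x b rfl hxc⟩
    · exact hnc ⟨himp x a (by rw [Set.pair_comm]) hxc, hxc⟩
  -- b is not a power of a
  have hzp : b ∉ Subgroup.zpowers a := by
    intro hb
    have hle : (⊤ : Subgroup Q8) ≤ Subgroup.zpowers a := by
      rw [← h]
      refine (Subgroup.closure_le _).2 ?_
      rintro x hx
      simp only [Set.mem_insert_iff, Set.mem_singleton_iff] at hx
      rcases hx with rfl | rfl
      · exact Subgroup.mem_zpowers _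
      · exact hb
    refine hnoncomm fun g k => ?_
    obtain ⟨m, rfl⟩ := Subgroup.mem_zpowers_iff.1 (hle (Subgroup.mem_top g))
    obtain ⟨l, rfl⟩ := Subgroup.mem_zpowers_iff.1 (hle (Subgroup.mem_top k))
    rw [← zpow_add, ← zpow_add, add_comm]
  refine ⟨hsq a (Or.inl rfl), hsq b (Or.inr rfl), ?_, ?_⟩
  · rintro rfl; exact hzp (Subgroup.mem_zpowers _)
  · rintro rfl; exact hzp (Subgroup.inv_mem _ (Subgroup.mem_zpowers _))

private lemma rels_of_props : ∀ a b : Q8, a ^ 2 ≠ 1 → b ^ 2 ≠ 1 → b ≠ a → b ≠ a⁻¹ →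
    a ^ 4 = 1 ∧ b ^ 2 = a ^ 2 ∧ a * b = b * a⁻¹ := by decide

/-- From a surjective hom out of the free group, get a bijective endo of Q₈
hitting the generator images. -/
private lemma exists_equiv (γ : FreeGroup (Fin 2) →* Q8) (hγ : Function.Surjective γ) :
    ∃ σ : QuaternionGroup 2 →* Q8, Function.Bijective σ ∧
      σ (QuaternionGroup.a 1) = γ (FreeGroup.of 0) ∧
      σ (QuaternionGroup.xa 0) = γ (FreeGroup.of 1) := by
  set A := γ (FreeGroup.of 0) with hA
  set B := γ (FreeGroup.of 1) with hB
  have hgen : Subgroup.closure ({A, B} : Set Q8) = ⊤ := by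
    have h1 : Set.range (fun i : Fin 2 => γ (FreeGroup.of i)) = {A, B} := by
      ext x
      simp only [Set.mem_range, Set.mem_insert_iff, Set.mem_singleton_iff]
      constructor
      · rintro ⟨i, rfl⟩; fin_cases i <;> simp [hA, hB]
      · rintro (rfl | rfl) <;> [exact ⟨0, rfl⟩; exact ⟨1, rfl⟩]
    have h2 : Set.range (fun i : Fin 2 => γ (FreeGroup.of i)) =
        γ '' Set.range FreeGroup.of := by
      rw [← Set.range_comp]; rfl
    calc Subgroup.closure ({A, B} : Set Q8)
        = Subgroup.closure (γ '' Set.range FreeGroup.of) := by rw [← h2, h1]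
      _ = Subgroup.map γ (Subgroup.closure (Set.range FreeGroup.of)) :=
          (MonoidHom.map_closure γ _).symm
      _ = Subgroup.map γ ⊤ := by rw [FreeGroup.closure_range_of]
      _ = γ.range := (MonoidHom.range_eq_map γ).symm
      _ = ⊤ := MonoidHom.range_eq_top.2 hγ
  obtain ⟨hA2, hB2, hne, hne'⟩ := gen_props A B hgen
  obtain ⟨h4, h22, hco⟩ := rels_of_props A B hA2 hB2 hne hne'
  obtain ⟨σ, hσA, hσB⟩ := quat_lift A B h4 h22 hco
  have hsurj : Function.Surjective σ := by
    rw [← MonoidHom.range_eq_top]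
    rw [eq_top_iff, ← hgen]
    refine (Subgroup.closure_le _).2 ?_
    rintro x hx
    simp only [Set.mem_insert_iff, Set.mem_singleton_iff] at hx
    rcases hx with rfl | rfl
    · exact ⟨QuaternionGroup.a 1, hσA⟩
    · exact ⟨QuaternionGroup.xa 0, hσB⟩
  exact ⟨σ, ⟨Finite.injective_iff_surjective.2 hsurj, hsurj⟩, hσA, hσB⟩

/-- Every surjective group homomorphism from the free group on two generators
onto the quaternion group Q₈ has the same kernel. -/
theorem ker_eq_of_surjective_to_quaternion
    (α β : FreeGroup (Fin 2) →* QuaternionGroup 2)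
    (hα : Function.Surjective α) (hβ : Function.Surjective β) :
    α.ker = β.ker := by
  obtain ⟨σ, hσbij, hσ0, hσ1⟩ := exists_equiv α hα
  obtain ⟨τ, hτbij, hτ0, hτ1⟩ := exists_equiv β hβ
  let eσ := MulEquiv.ofBijective σ hσbij
  let eτ := MulEquiv.ofBijective τ hτbij
  let Φ : QuaternionGroup 2 ≃* QuaternionGroup 2 := eσ.symm.trans eτ
  have hΦ : Φ.toMonoidHom.comp α = β := by
    refine FreeGroup.ext_hom _ _ fun i => ?_
    have h0 : eσ.symm (α (FreeGroup.of 0)) = QuaternionGroup.a 1 :=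
      eσ.symm_apply_eq.2 hσ0.symm
    have h1 : eσ.symm (α (FreeGroup.of 1)) = QuaternionGroup.xa 0 :=
      eσ.symm_apply_eq.2 hσ1.symm
    fin_cases i
    · show Φ (α (FreeGroup.of 0)) = β (FreeGroup.of 0)
      show eτ (eσ.symm (α (FreeGroup.of 0))) = _
      rw [h0]; exact hτ0
    · show Φ (α (FreeGroup.of 1)) = β (FreeGroup.of 1)
      show eτ (eσ.symm (α (FreeGroup.of 1))) = _
      rw [h1]; exact hτ1
  ext w
  simp only [MonoidHom.mem_ker]
  rw [← hΦ]
  simp only [MonoidHom.comp_apply, MulEquiv.coe_toMonoidHom]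
  exact ⟨fun hw => by rw [hw]; exact map_one Φ, fun hw => Φ.injective (by rw [hw]; exact (map_one Φ).symm)⟩
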